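/- For every graph G there exists a function f : V(G) → ℕ such that G is uniquely f-list colorable and the sum over all vertices v of f(v) equals n(G) + e(G). -/

import Mathlib

/-- A coloring `c` of the vertices is proper if adjacent vertices get different colors. -/
def IsProperColoring {V α : Type*} (G : SimpleGraph V) (c : V → α) : Prop :=
  ∀ ⦃u w⦄, G.Adj u w → c u ≠ c w

/-- `c` is an `L`-coloring of `G`: a proper coloring with `c v ∈ L v` for every vertex `v`. -/
def IsListColoring {V : Type*} (G : SimpleGraph V) (L : V → Finset ℕ) (c : V → ℕ) : Prop :=
  IsProperColoring G c ∧ ∀ v, c v ∈ L v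

/-- `G` is uniquely `f`-list colorable: there is a list assignment giving each vertex `v`
a list of exactly `f v` colors, from which `G` has exactly one list coloring. -/
def UniquelyFListColorable {V : Type*} (G : SimpleGraph V) (f : V → ℕ) : Prop :=
  ∃ L : V → Finset ℕ, (∀ v, (L v).card = f v) ∧ ∃! c, IsListColoring G L c

/-- `G` is uniquely `k`-list colorable. -/
def UniquelyKListColorable {V : Type*} (G : SimpleGraph V) (k : ℕ) : Prop :=
  UniquelyFListColorable G (fun _ => k)

/-- The m-number of `G`: the least `k` for which `G` is not uniquely `k`-list colorable. -/
noncomputable def mNumber {V : Type*} (G : SimpleGraph V) : ℕ :=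
  sInf {k | ¬ UniquelyKListColorable G k}

/-- For every graph `G` there is `f : V(G) → ℕ` such that `G` is uniquely
`f`-list colorable and `∑ v, f v = n(G) + e(G)`. -/
theorem exists_f_UfLC_sum_eq
    {V : Type} [Fintype V] [DecidableEq V] (G : SimpleGraph V) [DecidableRel G.Adj] :
    ∃ f : V → ℕ, UniquelyFListColorable G f ∧
      ∑ v, f v = Fintype.card V + G.edgeFinset.card := by
  classical
  set e := Fintype.equivFin V with he
  set A : V → Finset V := fun v => (G.neighborFinset v).filter (fun u => e u < e v) with hA
  set L : V → Finset ℕ := fun v =>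
    insert (e v : ℕ) ((A v).image (fun u => (e u : ℕ))) with hL
  have hnotmem : ∀ v, ((e v : ℕ)) ∉ (A v).image (fun u => (e u : ℕ)) := by
    intro v hv
    obtain ⟨u, hu, hue⟩ := Finset.mem_image.mp hv
    have := (Finset.mem_filter.mp hu).2
    omega
  have hcardL : ∀ v, (L v).card = 1 + (A v).card := by
    intro v
    rw [hL]
    rw [Finset.card_insert_of_notMem (hnotmem v), Finset.card_image_of_injOn, Nat.add_comm]
    intro a _ b _ hab
    exact e.injective (Fin.val_injective hab)
  refine ⟨fun v => (L v).card, ⟨L, fun v => rfl, ?_⟩, ?_⟩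
  · -- unique coloring
    refine ⟨fun v => (e v : ℕ), ⟨?_, fun v => Finset.mem_insert_self _ _⟩, ?_⟩
    · intro u w huw h
      exact G.ne_of_adj huw (e.injective (Fin.val_injective h))
    · intro d hd
      have key : ∀ n : ℕ, ∀ v, (e v : ℕ) < n → d v = (e v : ℕ) := by
        intro n
        induction n with
        | zero => intro v h; omega
        | succ n ih =>
          intro v hv
          have hdv : d v ∈ L v := hd.2 v
          rcases Finset.mem_insert.mp hdv with h | h
          · exact h
          · obtain ⟨u, hu, hue⟩ := Finset.mem_image.mp h
            obtain ⟨hadj, hlt⟩ := Finset.mem_filter.mp hu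
            have hadj' : G.Adj v u := (G.mem_neighborFinset v u).mp hadj
            have hdu : d u = (e u : ℕ) := ih u (by omega)
            exact absurd (hue.symm.trans hdu.symm) (hd.1 hadj')
      funext v
      exact key ((e v : ℕ) + 1) v (Nat.lt_succ_self _)
  · -- sum
    have hsum : ∑ v, (A v).card = G.edgeFinset.card := by
      rw [← Finset.card_sigma]
      apply Finset.card_bij (s := Finset.univ.sigma A) (t := G.edgeFinset) (fun (p : (_ : V) × V) _ => s(p.1, p.2))
      · rintro ⟨v, u⟩ hp
        have := (Finset.mem_filter.mp (Finset.mem_sigma.mp hp).2).1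
        rw [SimpleGraph.mem_edgeFinset]
        exact (G.mem_neighborFinset v u).mp this
      · rintro ⟨v, u⟩ hp ⟨v', u'⟩ hp' hEq
        have h1 := (Finset.mem_filter.mp (Finset.mem_sigma.mp hp).2).2
        have h2 := (Finset.mem_filter.mp (Finset.mem_sigma.mp hp').2).2
        rcases Sym2.eq_iff.mp hEq with ⟨rfl, rfl⟩ | ⟨rfl, rfl⟩
        · rfl
        · exact absurd h2 (not_lt.mpr h1.le)
      · intro s hs
        induction s with
        | _ a b =>
          have hab : G.Adj a b := SimpleGraph.mem_edgeFinset.mp hs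
          rcases lt_trichotomy (e a) (e b) with h | h | h
          · refine ⟨⟨b, a⟩, ?_, Sym2.eq_swap⟩
            exact Finset.mem_sigma.mpr ⟨Finset.mem_univ _,
              Finset.mem_filter.mpr ⟨(G.mem_neighborFinset b a).mpr hab.symm, h⟩⟩
          · exact absurd (e.injective h) (G.ne_of_adj hab)
          · refine ⟨⟨a, b⟩, ?_, rfl⟩
            exact Finset.mem_sigma.mpr ⟨Finset.mem_univ _,
              Finset.mem_filter.mpr ⟨(G.mem_neighborFinset a b).mpr hab, h⟩⟩
    calc ∑ v, (L v).card = ∑ v, (1 + (A v).card) := by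
          exact Finset.sum_congr rfl fun v _ => hcardL v
      _ = Fintype.card V + G.edgeFinset.card := by
          rw [Finset.sum_add_distrib, hsum, Finset.sum_const, Finset.card_univ, smul_eq_mul,
            Nat.mul_one]
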